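/- With the group law on ℝ^5 as above and γ₁=(1,0,0,0,0), γ₂=(0,1,0,0,0), for all integers k,l the product γ₁^k·γ₂^l equals (k, l, kl/2, k²l/12, −kl²/12). -/
import Mathlib


/-- The BCH product on `ℝ^5`. -/
noncomputable def bch (x y : Fin 5 → ℝ) : Fin 5 → ℝ :=
  ![x 0 + y 0,
    x 1 + y 1,
    x 2 + y 2 + (x 0 * y 1 - x 1 * y 0) / 2,
    x 3 + y 3 + (x 0 * y 2 - x 2 * y 0) / 2 + (x 0 - y 0) * (x 0 * y 1 - x 1 * y 0) / 12,
    x 4 + y 4 + (x 1 * y 2 - x 2 * y 1) / 2 + (x 1 - y 1) * (x 0 * y 1 - x 1 * y 0) / 12]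

/-- Iterated BCH product: natural powers. -/
noncomputable def bchPow (x : Fin 5 → ℝ) : ℕ → (Fin 5 → ℝ)
  | 0 => 0
  | n + 1 => bch (bchPow x n) x

/-- Integer powers for the BCH product; inverses are componentwise negation. -/
noncomputable def bchZPow (x : Fin 5 → ℝ) : ℤ → (Fin 5 → ℝ)
  | Int.ofNat n => bchPow x n
  | Int.negSucc n => -(bchPow x (n + 1))

lemma bchPow_g1 (n : ℕ) : bchPow ![1,0,0,0,0] n = ![(n:ℝ),0,0,0,0] := by
  induction n with
  | zero =>
    funext i; fin_cases i <;> simp [bchPow]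
  | succ n ih =>
    rw [bchPow, ih]
    funext i; fin_cases i <;> simp [bch] <;> push_cast <;> ring

lemma bchPow_g2 (n : ℕ) : bchPow ![0,1,0,0,0] n = ![0,(n:ℝ),0,0,0] := by
  induction n with
  | zero =>
    funext i; fin_cases i <;> simp [bchPow]
  | succ n ih =>
    rw [bchPow, ih]
    funext i; fin_cases i <;> simp [bch] <;> push_cast <;> ring

lemma bchZPow_g1 (k : ℤ) : bchZPow ![1,0,0,0,0] k = ![(k:ℝ),0,0,0,0] := by
  cases k with
  | ofNat n => rw [bchZPow, bchPow_g1]; norm_num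
  | negSucc n =>
    rw [bchZPow, bchPow_g1]
    funext i; fin_cases i <;> simp [Int.negSucc_eq] <;> push_cast <;> ring

lemma bchZPow_g2 (l : ℤ) : bchZPow ![0,1,0,0,0] l = ![0,(l:ℝ),0,0,0] := by
  cases l with
  | ofNat n => rw [bchZPow, bchPow_g2]; norm_num
  | negSucc n =>
    rw [bchZPow, bchPow_g2]
    funext i; fin_cases i <;> simp [Int.negSucc_eq] <;> push_cast <;> ring

/-- For `γ₁ = (1,0,0,0,0)` and `γ₂ = (0,1,0,0,0)` and all integers `k, l`, the
product `γ₁^k · γ₂^l` equals `(k, l, kl/2, k²l/12, −kl²/12)`. -/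
theorem bch_pow_formula (k l : ℤ) :
    bch (bchZPow ![1, 0, 0, 0, 0] k) (bchZPow ![0, 1, 0, 0, 0] l) =
      ![(k : ℝ), (l : ℝ), (k : ℝ) * l / 2, (k : ℝ) ^ 2 * l / 12,
        -((k : ℝ) * (l : ℝ) ^ 2) / 12] := by
  rw [bchZPow_g1, bchZPow_g2]
  funext i; fin_cases i <;> simp [bch] <;> ring
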